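/- Let Ω be a measurable space, let S be a Souslin space (a metrizable topological space that is the image of a Polish space under a continuous map), and let X be a Hausdorff topological space in which every compact subset is second countable in the relative topology. Let {F_s}_{s∈S} be a family of closed-valued multifunctions F_s : Ω → X such that the multifunction (ω, s) ↦ F_s(ω) on Ω × S (with the product σ-algebra of the σ-algebra on Ω and the Borel σ-algebra of S) is compact-measurable. Then the multifunction ω ↦ ⋂_{s∈S} F_s(ω) is universally compact-measurable. -/

import Mathlib

open TopologicalSpace MeasureTheory MeasurableSpace Set Filter Topology ENNReal

section Auxiliary

lemma myCountableGenerate {α : Type*} (𝒮 : Set (Set α)) {s : Set α}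
    (hs : MeasurableSet[MeasurableSpace.generateFrom 𝒮] s) :
    ∃ T ⊆ 𝒮, T.Countable ∧ MeasurableSet[MeasurableSpace.generateFrom T] s := by
  let m' : MeasurableSpace α :=
    { MeasurableSet' := fun s => ∃ T ⊆ 𝒮, T.Countable ∧ MeasurableSet[MeasurableSpace.generateFrom T] s
      measurableSet_empty := ⟨∅, empty_subset _, countable_empty,
        @MeasurableSet.empty _ (MeasurableSpace.generateFrom ∅)⟩
      measurableSet_compl := fun s ⟨T, hT, hTc, hTs⟩ => ⟨T, hT, hTc, hTs.compl⟩
      measurableSet_iUnion := by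
        intro g hg
        choose T hT hTc hTs using hg
        refine ⟨⋃ n, T n, iUnion_subset hT, countable_iUnion hTc, ?_⟩
        exact MeasurableSet.iUnion fun n =>
          MeasurableSpace.generateFrom_mono (subset_iUnion T n) _ (hTs n) }
  have : MeasurableSpace.generateFrom 𝒮 ≤ m' := by
    refine MeasurableSpace.generateFrom_le fun u hu => ?_
    exact ⟨{u}, by simpa using hu, countable_singleton u,
      measurableSet_generateFrom rfl⟩
  exact this _ hs

/-- Any measurable set in `Ω × (ℕ → ℕ)` is the preimage of a Borel set under a
measurable coding map into `(ℕ → ℕ) × (ℕ → ℕ)`. -/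
lemma myGen {Ω : Type*} [MeasurableSpace Ω] (E : Set (Ω × (ℕ → ℕ)))
    (hE : MeasurableSet E) :
    ∃ g : Ω → (ℕ → ℕ), Measurable g ∧ ∃ M : Set ((ℕ → ℕ) × (ℕ → ℕ)),
      MeasurableSet M ∧ E = Prod.map g id ⁻¹' M := by
  set 𝒮 : Set (Set (Ω × (ℕ → ℕ))) :=
    image2 (· ×ˢ ·) { s : Set Ω | MeasurableSet s } { t : Set (ℕ → ℕ) | MeasurableSet t } with h𝒮
  have hE' : MeasurableSet[MeasurableSpace.generateFrom 𝒮] E := by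
    rw [h𝒮, generateFrom_prod]; exact hE
  obtain ⟨T, hT𝒮, hTc, hTs⟩ := myCountableGenerate 𝒮 hE'
  -- enumerate `insert (∅ ×ˢ ∅) T`
  set T' : Set (Set (Ω × (ℕ → ℕ))) := insert ((∅ : Set Ω) ×ˢ (∅ : Set (ℕ → ℕ))) T with hT'
  have hT'𝒮 : T' ⊆ 𝒮 := by
    rw [hT']
    exact insert_subset (mem_image2_of_mem (show (∅:Set Ω) ∈ {s | MeasurableSet s} from MeasurableSet.empty) (show (∅:Set (ℕ → ℕ)) ∈ {t | MeasurableSet t} by exact (MeasurableSet.empty : MeasurableSet (∅ : Set (ℕ → ℕ))))) hT𝒮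
  have hT'c : T'.Countable := hTc.insert _
  obtain ⟨R, hR⟩ := hT'c.exists_eq_range ⟨_, mem_insert _ _⟩
  have hRrect : ∀ n, ∃ A : Set Ω, MeasurableSet A ∧ ∃ B : Set (ℕ → ℕ),
      MeasurableSet B ∧ A ×ˢ B = R n := by
    intro n
    have : R n ∈ 𝒮 := hT'𝒮 (hR ▸ mem_range_self n)
    obtain ⟨A, hA, B, hB, hAB⟩ := this
    exact ⟨A, hA, B, hB, hAB⟩
  choose A hA B hB hAB using hRrect
  set g : Ω → (ℕ → ℕ) := fun ω n => (A n).indicator (fun _ => 1) ω with hg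
  have hgm : Measurable g := by
    exact measurable_pi_lambda _ fun n => measurable_const.indicator (hA n)
  have hgA : ∀ n, g ⁻¹' {x | x n = 1} = A n := by
    intro n
    ext ω
    simp only [mem_preimage, mem_setOf_eq, hg]
    by_cases h : ω ∈ A n <;> simp [h, Set.indicator_apply]
  have key : MeasurableSpace.generateFrom (range R) ≤ MeasurableSpace.comap (Prod.map g id) inferInstance := by
    refine MeasurableSpace.generateFrom_le ?_
    rintro u ⟨n, rfl⟩
    refine ⟨{x : ℕ → ℕ | x n = 1} ×ˢ B n,
      ((measurable_pi_apply n) (measurableSet_singleton 1)).prod (hB n), ?_⟩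
    rw [← hAB n, ← hgA n]
    ext ⟨ω, x⟩
    simp [Prod.map]
  have hET' : MeasurableSet[MeasurableSpace.generateFrom (range R)] E := by
    rw [← hR]
    exact MeasurableSpace.generateFrom_mono (subset_insert _ _) _ hTs
  obtain ⟨M, hM, hpre⟩ := key _ hET'
  exact ⟨g, hgm, M, hM, hpre.symm⟩

abbrev NN := ℕ → ℕ

/-- box sets -/
def myB (l : NN) (n : ℕ) : Set NN := {x | ∀ i < n, x i ≤ l i}

lemma myB_zero (l : NN) : myB l 0 = univ := by
  ext x; simp [myB]

lemma myB_antitone (l : NN) : Antitone (myB l) := by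
  intro m n hmn x hx i hi
  exact hx i (lt_of_lt_of_le hi hmn)

lemma myB_update (l : NN) (n : ℕ) :
    (⋃ k, myB (Function.update l n k) (n + 1)) = myB l n := by
  ext x
  simp only [mem_iUnion, myB, mem_setOf_eq]
  constructor
  · rintro ⟨k, hk⟩ i hi
    have := hk i (by omega)
    rwa [Function.update_of_ne (by omega)] at this
  · intro h
    refine ⟨x n, fun i hi => ?_⟩
    rcases Nat.lt_succ_iff_lt_or_eq.1 hi with h' | rfl
    · rw [Function.update_of_ne (by omega)]; exact h i h'
    · rw [Function.update_self]

lemma myB_update_mono (l : NN) (n : ℕ) :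
    Monotone (fun k => myB (Function.update l n k) (n + 1)) := by
  intro k k' hk x hx i hi
  have hxi := hx i hi
  by_cases hin : i = n
  · subst hin
    rw [Function.update_self] at hxi ⊢
    exact hxi.trans hk
  · rwa [Function.update_of_ne hin] at hxi ⊢

lemma myB_congr {l l' : NN} (n : ℕ) (h : ∀ i < n, l i = l' i) : myB l n = myB l' n := by
  ext x; constructor <;> intro hx i hi
  · rw [← h i hi]; exact hx i hi
  · rw [h i hi]; exact hx i hi

/-- The range of a continuous map `(ℕ → ℕ) → (ℕ → ℕ)` is null-measurable for any
finite Borel measure. -/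
lemma myRangeNullMeasurable (f : NN → NN) (hf : Continuous f)
    (ν : Measure NN) [IsFiniteMeasure ν] : NullMeasurableSet (Set.range f) ν := by
  set c := ν (Set.range f) with hc
  -- main approximation claim
  have main : ∀ ε : ℝ≥0∞, ε ≠ 0 → ∃ C, MeasurableSet C ∧ C ⊆ Set.range f ∧ c - ε ≤ ν C := by
    intro ε hε
    rcases eq_or_ne c 0 with hc0 | hc0
    · exact ⟨∅, MeasurableSet.empty, empty_subset _, by simp [hc0, zero_tsub]⟩
    have hctop : c ≠ ⊤ := measure_ne_top ν _
    -- recursive construction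
    have hstep : ∀ (l : NN) (n : ℕ), c - ε < ν (f '' myB l n) →
        ∃ k, c - ε < ν (f '' myB (Function.update l n k) (n + 1)) := by
      intro l n hl
      have h1 : ν (f '' myB l n) = ⨆ k, ν (f '' myB (Function.update l n k) (n + 1)) := by
        rw [← myB_update l n, image_iUnion]
        exact Monotone.measure_iUnion fun k k' hk =>
          image_mono (f := f) (myB_update_mono l n hk)
      rw [h1] at hl
      exact lt_iSup_iff.1 hl
    have h0 : c - ε < ν (f '' myB (fun _ => 0) 0) := by
      rw [myB_zero, image_univ, ← hc]
      exact ENNReal.sub_lt_self hctop hc0 hε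
    -- iterate
    let G : ∀ n : ℕ, {l : NN // c - ε < ν (f '' myB l n)} := fun n =>
      Nat.rec ⟨fun _ => 0, h0⟩
        (fun n p => ⟨Function.update p.1 n (hstep p.1 n p.2).choose,
          (hstep p.1 n p.2).choose_spec⟩) n
    have hGsucc : ∀ n, (G (n + 1)).1 = Function.update (G n).1 n
        (hstep (G n).1 n (G n).2).choose := fun n => rfl
    have hGstable : ∀ i m, i < m → (G m).1 i = (G (i + 1)).1 i := by
      intro i m him
      induction m with
      | zero => omega
      | succ m ih =>
        rcases Nat.lt_succ_iff_lt_or_eq.1 him with h' | h'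
        · rw [hGsucc m, Function.update_of_ne (by omega)]
          exact ih h'
        · subst h'; rfl
    set N : NN := fun i => (G (i + 1)).1 i with hN
    have hBN : ∀ n, c - ε < ν (f '' myB N n) := by
      intro n
      have : myB N n = myB (G n).1 n :=
        myB_congr n fun i hi => (hGstable i n hi).symm
      rw [this]
      exact (G n).2
    -- the compact-ish limit set
    set C : Set NN := ⋂ n, closure (f '' myB N n) with hC
    have hCmeas : MeasurableSet C :=
      MeasurableSet.iInter fun n => isClosed_closure.measurableSet
    have hCin : C ⊆ Set.range f := by
      intro y hy
      obtain ⟨U, hU⟩ := (𝓝 y).exists_antitone_basis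
      have hsel : ∀ n, ∃ x, x ∈ myB N n ∧ f x ∈ U n := by
        intro n
        have hyc : y ∈ closure (f '' myB N n) := mem_iInter.1 hy n
        obtain ⟨z, hzU, hzim⟩ := mem_closure_iff_nhds.1 hyc (U n) (hU.1.mem_of_mem trivial)
        obtain ⟨x, hx, rfl⟩ := hzim
        exact ⟨x, hx, hzU⟩
      choose x hxB hfx using hsel
      have htend : Tendsto (fun n => f (x n)) atTop (𝓝 y) := hU.tendsto hfx
      set M : NN := fun i => max (N i) ((Finset.range (i + 1)).sup fun n => x n i) with hM
      have hK₀ : IsCompact {z : NN | ∀ i, z i ≤ M i} := by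
        have : {z : NN | ∀ i, z i ≤ M i} = Set.pi univ fun i => Set.Iic (M i) := by
          ext z; simp only [mem_univ_pi, mem_Iic, mem_setOf_eq]
        rw [this]
        exact isCompact_univ_pi fun i => (Set.finite_Iic (M i)).isCompact
      have hxK₀ : ∀ n, x n ∈ {z : NN | ∀ i, z i ≤ M i} := by
        intro n i
        rcases lt_or_ge i n with h' | h'
        · exact le_max_of_le_left (hxB n i h')
        · exact le_max_of_le_right
            (Finset.le_sup (f := fun n => x n i) (Finset.mem_range.2 (by omega)))
      obtain ⟨a, haK₀, φ, hφ, hconv⟩ := hK₀.tendsto_subseq hxK₀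
      have h1 : Tendsto (fun k => f (x (φ k))) atTop (𝓝 (f a)) :=
        (hf.tendsto a).comp hconv
      have h2 : Tendsto (fun k => f (x (φ k))) atTop (𝓝 y) :=
        htend.comp hφ.tendsto_atTop
      exact ⟨a, (tendsto_nhds_unique h1 h2)⟩
    have hCge : c - ε ≤ ν C := by
      have htend : Tendsto (fun n => ν (closure (f '' myB N n))) atTop (𝓝 (ν C)) := by
        refine tendsto_measure_iInter_atTop
          (fun n => isClosed_closure.measurableSet.nullMeasurableSet)
          (fun m n hmn => closure_mono (image_mono (f := f) (myB_antitone N hmn)))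
          ⟨0, measure_ne_top ν _⟩
      refine ge_of_tendsto htend (Eventually.of_forall fun n => ?_)
      exact le_trans (hBN n).le (measure_mono subset_closure)
    exact ⟨C, hCmeas, hCin, hCge⟩
  -- assemble
  choose Cs hCsm hCsin hCsge using fun k : ℕ => main ((k + 1 : ℕ) : ℝ≥0∞)⁻¹ (by simp)
  set Cinf : Set NN := ⋃ k, Cs k with hCinf
  have hCim : MeasurableSet Cinf := MeasurableSet.iUnion hCsm
  have hCsub : Cinf ⊆ Set.range f := iUnion_subset hCsin
  have hCeq : ν Cinf = c := by
    refine le_antisymm (measure_mono hCsub) ?_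
    refine ENNReal.le_of_forall_pos_le_add fun ε hε hfin => ?_
    obtain ⟨k, hk⟩ := ENNReal.exists_inv_nat_lt (a := (ε : ℝ≥0∞)) (by exact_mod_cast hε.ne')
    have h1 : c - ((k + 1 : ℕ) : ℝ≥0∞)⁻¹ ≤ ν Cinf :=
      le_trans (hCsge k) (measure_mono (subset_iUnion Cs k))
    have h2 : c ≤ ν Cinf + ((k + 1 : ℕ) : ℝ≥0∞)⁻¹ := by
      rw [← tsub_le_iff_right]; exact h1
    refine h2.trans (add_le_add_right ?_ _)
    refine le_of_lt (lt_of_le_of_lt ?_ hk)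
    exact ENNReal.inv_le_inv.2 (by exact_mod_cast Nat.le_succ k)
  have hnull : ν (Set.range f \ Cinf) = 0 := by
    have hsub : Set.range f \ Cinf ⊆ toMeasurable ν (Set.range f) \ Cinf :=
      diff_subset_diff_left (subset_toMeasurable ν _)
    refine measure_mono_null hsub ?_
    rw [measure_diff (hCsub.trans (subset_toMeasurable ν _))
      hCim.nullMeasurableSet (measure_ne_top ν _), measure_toMeasurable, ← hc, hCeq]
    simp
  have : Set.range f = Cinf ∪ (Set.range f \ Cinf) := by
    rw [union_diff_cancel' (le_refl _) hCsub]
  rw [this]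
  exact hCim.nullMeasurableSet.union (NullMeasurableSet.of_null hnull)

/-- Measurable projection theorem along `ℕ → ℕ`. -/
lemma myProjNN {Ω : Type*} [MeasurableSpace Ω] (E : Set (Ω × NN))
    (hE : MeasurableSet E) (μ : Measure Ω) [IsFiniteMeasure μ] :
    NullMeasurableSet {ω | ∃ x : NN, (ω, x) ∈ E} μ := by
  obtain ⟨g, hgm, M, hM, rfl⟩ := myGen E hE
  set A : Set NN := Prod.fst '' M with hA
  have heq : {ω | ∃ x : NN, (ω, x) ∈ Prod.map g id ⁻¹' M} = g ⁻¹' A := by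
    ext ω
    simp only [mem_setOf_eq, mem_preimage, hA, mem_image]
    constructor
    · rintro ⟨x, hx⟩; exact ⟨(g ω, x), hx, rfl⟩
    · rintro ⟨⟨a, b⟩, hab, h⟩
      exact ⟨b, by simpa [← h] using hab⟩
  rw [heq]
  have hAan : AnalyticSet A := hM.analyticSet_image measurable_fst
  set ν : Measure NN := μ.map g with hν
  have : IsFiniteMeasure ν := by rw [hν]; infer_instance
  have hAnm : NullMeasurableSet A ν := by
    rw [AnalyticSet_def] at hAan
    rcases hAan with h | ⟨f, hfc, hfr⟩
    · rw [h]; exact MeasurableSet.empty.nullMeasurableSet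
    · rw [← hfr]; exact myRangeNullMeasurable f hfc ν
  obtain ⟨t, htm, hae⟩ := hAnm
  refine ⟨g ⁻¹' t, hgm htm, ?_⟩
  rw [← measure_symmDiff_eq_zero_iff] at hae ⊢
  have h1 : symmDiff (g ⁻¹' A) (g ⁻¹' t) = g ⁻¹' (symmDiff A t) := by
    simp [Set.symmDiff_def, preimage_union, preimage_diff]
  rw [h1]
  have h2 : g ⁻¹' (symmDiff A t) ⊆ g ⁻¹' (toMeasurable ν (symmDiff A t)) :=
    preimage_mono (subset_toMeasurable ν _)
  refine measure_mono_null h2 ?_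
  have h3 : μ (g ⁻¹' (toMeasurable ν (symmDiff A t))) = ν (toMeasurable ν (symmDiff A t)) := by
    rw [hν, Measure.map_apply hgm (measurableSet_toMeasurable ν _)]
  rw [h3, measure_toMeasurable, hae]

/-- Measurable projection theorem along a Souslin space. -/
lemma myProj {Ω S : Type*} [MeasurableSpace Ω] [TopologicalSpace S] [MeasurableSpace S]
    [BorelSpace S]
    (hS : ∃ (P : Type) (tP : TopologicalSpace P), @PolishSpace P tP ∧
      ∃ f : P → S, @Continuous P S tP _ f ∧ Function.Surjective f)
    (E : Set (Ω × S)) (hE : MeasurableSet E) (μ : Measure Ω) [IsFiniteMeasure μ] :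
    NullMeasurableSet {ω | ∃ s : S, (ω, s) ∈ E} μ := by
  obtain ⟨P, tP, hPol, f, hfc, hfs⟩ := hS
  rcases isEmpty_or_nonempty P with hP | hP
  · have hSe : IsEmpty S := ⟨fun s => (hfs s).elim fun p _ => hP.false p⟩
    have : {ω | ∃ s : S, (ω, s) ∈ E} = ∅ := by
      ext ω; simp only [mem_setOf_eq, mem_empty_iff_false, iff_false]
      rintro ⟨s, -⟩; exact hSe.false s
    rw [this]
    exact MeasurableSet.empty.nullMeasurableSet
  · letI := tP
    letI : PolishSpace P := hPol
    obtain ⟨u, huc, hus⟩ := PolishSpace.exists_nat_nat_continuous_surjective P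
    set v : NN → S := f ∘ u with hv
    have hvc : Continuous v := hfc.comp huc
    have hvs : Function.Surjective v := hfs.comp hus
    have hvm : Measurable v := hvc.measurable
    set E' : Set (Ω × NN) := (fun p : Ω × NN => (p.1, v p.2)) ⁻¹' E with hE'
    have hE'm : MeasurableSet E' :=
      (measurable_fst.prodMk (hvm.comp measurable_snd)) hE
    have heq : {ω | ∃ s : S, (ω, s) ∈ E} = {ω | ∃ x : NN, (ω, x) ∈ E'} := by
      ext ω
      simp only [mem_setOf_eq, hE', mem_preimage]
      constructor
      · rintro ⟨s, hs⟩
        obtain ⟨x, rfl⟩ := hvs s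
        exact ⟨x, hs⟩
      · rintro ⟨x, hx⟩; exact ⟨v x, hx⟩
    rw [heq]
    exact myProjNN E' hE'm μ

end Auxiliary

/-- Souslin intersection theorem: the intersection of a compact-measurable Souslin
family of closed-valued multifunctions into a Hausdorff space with second countable
compacts is universally compact-measurable. -/
theorem stmt_3 {Ω : Type*} [MeasurableSpace Ω]
    {S : Type*} [TopologicalSpace S] [MetrizableSpace S] [MeasurableSpace S] [BorelSpace S]
    (hS : ∃ (P : Type) (tP : TopologicalSpace P), @PolishSpace P tP ∧
      ∃ f : P → S, @Continuous P S tP _ f ∧ Function.Surjective f)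
    {X : Type*} [TopologicalSpace X] [T2Space X]
    (hX : ∀ K : Set X, IsCompact K → SecondCountableTopology K)
    (F : S → Ω → Set X)
    (hFcl : ∀ s ω, IsClosed (F s ω))
    (hF : ∀ K : Set X, IsCompact K →
      MeasurableSet {p : Ω × S | (F p.2 p.1 ∩ K).Nonempty}) :
    ∀ K : Set X, IsCompact K → ∀ (μ : Measure Ω), IsFiniteMeasure μ →
      NullMeasurableSet {ω | ((⋂ s, F s ω) ∩ K).Nonempty} μ := by
  intro K hK μ hμ
  haveI : SecondCountableTopology ↥K := hX K hK
  haveI : CompactSpace ↥K := isCompact_iff_compactSpace.mp hK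
  letI : MetricSpace ↥K := TopologicalSpace.metrizableSpaceMetric ↥K
  obtain ⟨D, hDc, hDd⟩ := TopologicalSpace.exists_countable_dense ↥K
  -- the small compact balls
  set KB : ↥K → ℕ → Set X := fun q m => Subtype.val '' Metric.closedBall q (1 / (m + 1) : ℝ)
    with hKB
  have hKBc : ∀ q m, IsCompact (KB q m) := fun q m =>
    (Metric.isClosed_closedBall.isCompact).image continuous_subtype_val
  -- the approximating sets
  set G : ↥K → ℕ → Set Ω := fun q m => {ω | ∀ s, (F s ω ∩ KB q m).Nonempty} with hG
  have hGnm : ∀ q m, NullMeasurableSet (G q m) μ := by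
    intro q m
    have h1 : (G q m)ᶜ = {ω | ∃ s : S, (ω, s) ∈ {p : Ω × S | (F p.2 p.1 ∩ KB q m).Nonempty}ᶜ} := by
      ext ω
      simp only [hG, mem_compl_iff, mem_setOf_eq, not_forall]
    have h2 : NullMeasurableSet ((G q m)ᶜ) μ := by
      rw [h1]
      exact myProj hS _ (hF (KB q m) (hKBc q m)).compl μ
    simpa using h2.compl
  -- the characterization
  have hchar : {ω | ((⋂ s, F s ω) ∩ K).Nonempty} = ⋂ m : ℕ, ⋃ q ∈ D, G q m := by
    ext ω
    simp only [mem_setOf_eq, mem_iInter, mem_iUnion]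
    constructor
    · rintro ⟨x, hxI, hxK⟩ m
      obtain ⟨q, hqD, hq⟩ := hDd.exists_dist_lt (⟨x, hxK⟩ : ↥K)
        (by positivity : (0 : ℝ) < 1 / (m + 1))
      refine ⟨q, hqD, fun s => ⟨x, mem_iInter.1 hxI s, ?_⟩⟩
      exact ⟨⟨x, hxK⟩, Metric.mem_closedBall.2 hq.le, rfl⟩
    · intro h
      choose q hqD hq using h
      obtain ⟨x, -, φ, hφ, hconv⟩ := isCompact_univ.tendsto_subseq (fun m => mem_univ (q m))
      refine ⟨x.1, mem_iInter.2 fun s => ?_, x.2⟩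
      -- extract points
      have hsel : ∀ m, ∃ z : ↥K, z.1 ∈ F s ω ∧ z ∈ Metric.closedBall (q m) (1 / (m + 1) : ℝ) := by
        intro m
        obtain ⟨y, hyF, hyKB⟩ := hq m s
        obtain ⟨z, hz, rfl⟩ := hyKB
        exact ⟨z, hyF, hz⟩
      choose z hzF hzB using hsel
      have hdist : ∀ k, dist (z (φ k)) x ≤ 1 / (k + 1 : ℝ) + dist (q (φ k)) x := by
        intro k
        have h1 : dist (z (φ k)) (q (φ k)) ≤ 1 / (φ k + 1 : ℝ) := hzB (φ k)
        have h2 : (1 : ℝ) / (φ k + 1) ≤ 1 / (k + 1) := by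
          apply one_div_le_one_div_of_le (by positivity)
          have : (k : ℝ) ≤ (φ k : ℝ) := Nat.cast_le.2 hφ.le_apply
          linarith
        calc dist (z (φ k)) x ≤ dist (z (φ k)) (q (φ k)) + dist (q (φ k)) x := dist_triangle _ _ _
          _ ≤ 1 / (k + 1 : ℝ) + dist (q (φ k)) x := by linarith
      have htend0 : Tendsto (fun k => dist (z (φ k)) x) atTop (𝓝 0) := by
        refine squeeze_zero (fun k => dist_nonneg) hdist ?_
        have h1 : Tendsto (fun k : ℕ => 1 / (k + 1 : ℝ)) atTop (𝓝 0) :=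
          tendsto_one_div_add_atTop_nhds_zero_nat
        have h2 : Tendsto (fun k => dist (q (φ k)) x) atTop (𝓝 0) :=
          tendsto_iff_dist_tendsto_zero.1 hconv
        simpa using h1.add h2
      have hzt : Tendsto (fun k => z (φ k)) atTop (𝓝 x) :=
        tendsto_iff_dist_tendsto_zero.2 htend0
      have hvt : Tendsto (fun k => (z (φ k)).1) atTop (𝓝 x.1) :=
        (continuous_subtype_val.tendsto x).comp hzt
      exact (hFcl s ω).mem_of_tendsto hvt (Eventually.of_forall fun k => hzF (φ k))
  rw [hchar]
  exact NullMeasurableSet.iInter fun m =>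
    NullMeasurableSet.biUnion hDc fun q _ => hGnm q m
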